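/- For every quasi-choice correspondence c over a finite set, dem(c) ≤ 2·lib(c): given a liberal representation of c of size k, adding k neutral ballots (each selecting everything) yields a democratic representation of size 2k. -/
import Mathlib


/-- `r` rationalizes the quasi-choice `c`: `c A` is the set of `r`-maximal elements of `A`. -/
def Rationalizes {X : Type*} (r : X → X → Prop) (c : Set X → Set X) : Prop :=
  ∀ A : Set X, c A = {a ∈ A | ∀ b ∈ A, ¬ r b a}

/-- `c` is freely rationalizable (a ballot): rationalized by an arbitrary binary relation. -/
def FreelyRat {X : Type*} (c : Set X → Set X) : Prop :=
  ∃ r : X → X → Prop, Rationalizes r c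

/-- `c` is asymmetrically rationalizable. -/
def AsymRat {X : Type*} (c : Set X → Set X) : Prop :=
  ∃ r : X → X → Prop, (∀ a b, r a b → ¬ r b a) ∧ Rationalizes r c

/-- Contractiveness: `c` is a quasi-choice. -/
def IsQuasiChoice {X : Type*} (c : Set X → Set X) : Prop :=
  ∀ A : Set X, c A ⊆ A

/-- Axiom α (Chernoff, Standard Contraction Consistency). -/
def AxiomAlpha {X : Type*} (c : Set X → Set X) : Prop :=
  ∀ ⦃A B : Set X⦄ ⦃x : X⦄, A ⊆ B → x ∈ A → x ∈ c B → x ∈ c A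

/-- Axiom γ (Standard Expansion Consistency). -/
def AxiomGamma {X : Type*} (c : Set X → Set X) : Prop :=
  ∀ ⦃A B : Set X⦄ ⦃x : X⦄, x ∈ c A → x ∈ c B → x ∈ c (A ∪ B)

/-- A liberal representation of `c` by the family of ballots `v`. -/
def IsLiberalRep {X : Type*} (c : Set X → Set X) {k : ℕ} (v : Fin k → Set X → Set X) : Prop :=
  (∀ i, FreelyRat (v i)) ∧
    ∀ A : Set X, ∀ x ∈ A, (x ∈ c A ↔ ∃ i, x ∈ v i A)

/-- A democratic representation of `c` by the family of ballots `v`: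
an item is chosen iff more than half of the ballots endorse it. -/
def IsDemRep {X : Type*} (c : Set X → Set X) {k : ℕ} (v : Fin k → Set X → Set X) : Prop :=
  (∀ i, FreelyRat (v i)) ∧
    ∀ A : Set X, ∀ x ∈ A, (x ∈ c A ↔ 2 * Nat.card {i : Fin k // x ∈ v i A} > k)

/-- The liberal number of `c`: the minimum size of a liberal representation (⊤ if none). -/
noncomputable def lib {X : Type*} (c : Set X → Set X) : ℕ∞ :=
  sInf {n : ℕ∞ | ∃ (k : ℕ) (v : Fin k → Set X → Set X), 0 < k ∧ IsLiberalRep c v ∧ n = (k : ℕ∞)}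

/-- The democratic number of `c`: the minimum size of a democratic representation (⊤ if none). -/
noncomputable def dem {X : Type*} (c : Set X → Set X) : ℕ∞ :=
  sInf {n : ℕ∞ | ∃ (k : ℕ) (v : Fin k → Set X → Set X), 0 < k ∧ IsDemRep c v ∧ n = (k : ℕ∞)}

/-- `c` is `s`-majoritarian: some finite family of ballots selects exactly the items
endorsed by a share of ballots strictly larger than `s`. -/
def Majoritarian {X : Type*} (s : ℝ) (c : Set X → Set X) : Prop :=
  ∃ (k : ℕ) (v : Fin k → Set X → Set X), 0 < k ∧ (∀ i, FreelyRat (v i)) ∧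
    ∀ A : Set X, ∀ x ∈ A,
      (x ∈ c A ↔ (Nat.card {i : Fin k // x ∈ v i A} : ℝ) / (k : ℝ) > s)

theorem stmt12 {X : Type*} [Fintype X] (c : Set X → Set X) (hq : IsQuasiChoice c) :
    dem c ≤ 2 * lib c := by
  classical
  set S := {n : ℕ∞ | ∃ (k : ℕ) (v : Fin k → Set X → Set X), 0 < k ∧ IsLiberalRep c v ∧ n = (k : ℕ∞)} with hS
  rcases Set.eq_empty_or_nonempty S with h | h
  · have hlib : lib c = ⊤ := by rw [lib, ← hS, h, sInf_empty]
    rw [hlib]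
    simp
  · have hmem : sInf S ∈ S := csInf_mem h
    obtain ⟨k, v, hk, hrep, hval⟩ := hmem
    have hlib : lib c = (k : ℕ∞) := hval
    rw [hlib]
    -- construct democratic representation of size 2k
    set w : Fin (2*k) → Set X → Set X :=
      fun i => if h : (i : ℕ) < k then v ⟨i, h⟩ else id with hw
    have hwfree : ∀ i, FreelyRat (w i) := by
      intro i
      by_cases hi : (i : ℕ) < k
      · simpa [hw, hi] using hrep.1 ⟨i, hi⟩
      · refine ⟨fun _ _ => False, fun A => ?_⟩
        ext a; simp [hw, hi]
    have hall : ∀ (A : Set X) (x : X), x ∈ A → ∀ i : Fin (2*k), k ≤ (i : ℕ) → x ∈ w i A := by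
      intro A x hx i hi
      simp [hw, Nat.not_lt.mpr hi]
      exact hx
    have hdem : IsDemRep c w := by
      refine ⟨hwfree, fun A x hx => ?_⟩
      constructor
      · intro hxc
        obtain ⟨i0, hi0⟩ := (hrep.2 A x hx).mp hxc
        have hv : x ∈ w ⟨(i0 : ℕ), by omega⟩ A := by
          simp only [hw]
          rw [dif_pos i0.isLt]
          simpa using hi0
        set f : Fin (k+1) → {i : Fin (2*k) // x ∈ w i A} :=
          fun j => if h : (j : ℕ) < k then
              ⟨⟨k + j, by omega⟩, hall A x hx _ (by simp)⟩
            else ⟨⟨(i0 : ℕ), by omega⟩, hv⟩ with hf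
        have hinj : Function.Injective f := by
          intro j1 j2 hj
          by_cases h1 : (j1 : ℕ) < k <;> by_cases h2 : (j2 : ℕ) < k <;>
            simp [hf, h1, h2, Subtype.ext_iff, Fin.ext_iff] at hj ⊢ <;>
            · have := i0.isLt
              omega
        have hcard : k + 1 ≤ Nat.card {i : Fin (2*k) // x ∈ w i A} := by
          have := Nat.card_le_card_of_injective f hinj
          simpa using this
        omega
      · intro hN
        by_contra hxc
        have hnone : ∀ i : Fin k, x ∉ v i A := by
          intro i hi
          exact hxc ((hrep.2 A x hx).mpr ⟨i, hi⟩)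
        have hge : ∀ i : Fin (2*k), x ∈ w i A → k ≤ (i : ℕ) := by
          intro i hi
          by_contra hik
          push_neg at hik
          simp [hw, hik] at hi
          exact hnone ⟨i, hik⟩ hi
        set g : {i : Fin (2*k) // x ∈ w i A} → Fin k :=
          fun p => ⟨(p.1 : ℕ) - k, by have h1 := hge p.1 p.2; have h2 := p.1.isLt; omega⟩ with hg
        have hinj : Function.Injective g := by
          intro p1 p2 hp
          have h1 := hge p1.1 p1.2
          have h2 := hge p2.1 p2.2
          simp [hg, Fin.ext_iff] at hp
          ext
          · omega
        have hcard : Nat.card {i : Fin (2*k) // x ∈ w i A} ≤ k := by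
          have := Nat.card_le_card_of_injective g hinj
          simpa using this
        omega
    have : ((2*k : ℕ) : ℕ∞) ∈ {n : ℕ∞ | ∃ (m : ℕ) (u : Fin m → Set X → Set X), 0 < m ∧ IsDemRep c u ∧ n = (m : ℕ∞)} := ⟨2*k, w, by omega, hdem, rfl⟩
    have hle : dem c ≤ ((2*k : ℕ) : ℕ∞) := sInf_le this
    calc dem c ≤ ((2*k : ℕ) : ℕ∞) := hle
      _ = 2 * (k : ℕ∞) := by push_cast; ring
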